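/- arXiv:1511.05803 — 7 statements merged into one kernel-verified Lean document; each statement's English description precedes it below -/
import Mathlib

section
/- Let S : F → G be a nonzero continuous linear map between real Hilbert spaces, let (η_j)_{j ∈ J} be an orthonormal family in F and λ_1 ≥ λ_2 ≥ ⋯ > 0 reals with S*(S η_j) = λ_j·η_j for all j ∈ J, and suppose (λ_j^{-1/2}·S η_j)_{j ∈ J} is a complete orthonormal system of the closure of the range of S in G. Fix m ∈ J and suppose h ∈ G satisfies ⟨h, S η_j⟩_G = 0 for all j ≤ m. Then ‖S* h‖_F² ≤ λ'·‖h‖_G², where λ' = sup_{j ∈ J, j > m} λ_j (with λ' = 0 if no index j > m exists). -/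
open scoped RealInnerProductSpace

section Aux

variable {F G : Type*}
    [NormedAddCommGroup F] [InnerProductSpace ℝ F] [CompleteSpace F]
    [NormedAddCommGroup G] [InnerProductSpace ℝ G] [CompleteSpace G]

/-- orthogonal of closure equals orthogonal. -/
lemma aux_orth_closure (K : Submodule ℝ G) : K.topologicalClosureᗮ = Kᗮ := by
  rw [← Submodule.orthogonal_orthogonal_eq_closure, Submodule.triorthogonal_eq_orthogonal]

end Aux

/-- Let `S : F → G` be nonzero, `(η j)` an orthonormal family of eigenvectors of `S*S`
with nonincreasing positive eigenvalues `lam j`, such that the normalized images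
`(√(lam j))⁻¹ • S (η j)` form a complete orthonormal system of the closure of the range
of `S`.  Fix an index `m` and suppose `h ∈ G` is orthogonal to `S (η j)` for all `j ≤ m`.
Then `‖S* h‖² ≤ λ' * ‖h‖²`, where `λ' = sup {lam j : j > m}` (interpreted as `0` if no
index `j > m` exists, which is the real `sSup` of the empty set). -/
theorem norm_adjoint_sq_le_of_orthogonal_to_top {F G : Type*}
    [NormedAddCommGroup F] [InnerProductSpace ℝ F] [CompleteSpace F]
    [NormedAddCommGroup G] [InnerProductSpace ℝ G] [CompleteSpace G]
    {ι : Type*} [LinearOrder ι]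
    (S : F →L[ℝ] G) (hS : S ≠ 0)
    (η : ι → F) (hon : Orthonormal ℝ η)
    (lam : ι → ℝ) (hanti : Antitone lam) (hpos : ∀ j, 0 < lam j)
    (heig : ∀ j, ContinuousLinearMap.adjoint S (S (η j)) = lam j • η j)
    (hONS : Orthonormal ℝ fun j => (Real.sqrt (lam j))⁻¹ • S (η j))
    (hcomplete : (Submodule.span ℝ
        (Set.range fun j => (Real.sqrt (lam j))⁻¹ • S (η j))).topologicalClosure
        = (LinearMap.range (S : F →ₗ[ℝ] G)).topologicalClosure)
    (m : ι) (h : G) (hh : ∀ j, j ≤ m → ⟪h, S (η j)⟫ = 0) :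
    ‖ContinuousLinearMap.adjoint S h‖ ^ 2 ≤ sSup (lam '' {j | m < j}) * ‖h‖ ^ 2 := by
  classical
  set A := ContinuousLinearMap.adjoint S with hA
  set lam' := sSup (lam '' {j | m < j}) with hlam'
  set e : ι → G := fun j => (Real.sqrt (lam j))⁻¹ • S (η j) with he
  set w : F := A h with hw
  have hsqrt_pos : ∀ j, 0 < Real.sqrt (lam j) := fun j => Real.sqrt_pos.2 (hpos j)
  -- λ' ≥ 0
  have hlam'0 : 0 ≤ lam' := Real.sSup_nonneg (by rintro x ⟨j, _, rfl⟩; exact (hpos j).le)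
  -- boundedness of eigenvalues
  have hlamval : ∀ j, lam j = ‖S (η j)‖ ^ 2 := by
    intro j
    have h1 : ⟪A (S (η j)), η j⟫ = ⟪S (η j), S (η j)⟫ :=
      ContinuousLinearMap.adjoint_inner_left S (η j) (S (η j))
    rw [heig j, real_inner_smul_left, real_inner_self_eq_norm_sq,
      real_inner_self_eq_norm_sq, hon.1 j, one_pow, mul_one] at h1
    exact h1
  have hbdd : BddAbove (lam '' {j | m < j}) := by
    refine ⟨‖S‖ ^ 2, ?_⟩
    rintro x ⟨j, _, rfl⟩
    rw [hlamval j]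
    have := S.le_opNorm (η j)
    rw [hon.1 j, mul_one] at this
    exact pow_le_pow_left₀ (norm_nonneg _) this 2
  have hlamle : ∀ j, m < j → lam j ≤ lam' := fun j hj =>
    le_csSup hbdd ⟨j, hj, rfl⟩
  -- S (η j) = √(lam j) • e j
  have hSe : ∀ j, S (η j) = Real.sqrt (lam j) • e j := by
    intro j
    rw [he]
    rw [smul_smul, mul_inv_cancel₀ (hsqrt_pos j).ne', one_smul]
  -- A (e j) = √(lam j) • η j
  have hAe : ∀ j, A (e j) = Real.sqrt (lam j) • η j := by
    intro j
    rw [he]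
    simp only [map_smul, heig j, smul_smul]
    congr 1
    rw [inv_mul_eq_div, div_eq_iff (hsqrt_pos j).ne']
    exact (Real.mul_self_sqrt (hpos j).le).symm
  -- the submodules
  set E : Submodule ℝ G := Submodule.span ℝ (Set.range e) with hE
  set V : Submodule ℝ G := E.topologicalClosure with hV
  set Kfull : Submodule ℝ F := (Submodule.span ℝ (Set.range η)).topologicalClosure with hKfull
  set K' : Submodule ℝ F := (Submodule.span ℝ (η '' {j | m < j})).topologicalClosure with hK'
  haveI : CompleteSpace V := E.isClosed_topologicalClosure.completeSpace_coe
  haveI : CompleteSpace K' :=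
    (Submodule.span ℝ (η '' {j | m < j})).isClosed_topologicalClosure.completeSpace_coe
  -- w ⊥ η j for j ≤ m
  have hwperp : ∀ j, j ≤ m → ⟪w, η j⟫ = 0 := by
    intro j hj
    rw [hw, ContinuousLinearMap.adjoint_inner_left]
    exact hh j hj
  -- w ∈ Kfull
  have hwKfull : w ∈ Kfull := by
    set p : G := (V.orthogonalProjectionOnto h : G) with hp
    have hq : h - p ∈ Vᗮ := Submodule.sub_starProjection_mem_orthogonal h
    have hAq : A (h - p) = 0 := by
      have hz : ⟪A (h - p), A (h - p)⟫ = 0 := by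
        rw [ContinuousLinearMap.adjoint_inner_left]
        have hmem : S (A (h - p)) ∈ V := by
          rw [hcomplete]
          exact (LinearMap.range (S : F →ₗ[ℝ] G)).le_topologicalClosure ⟨A (h - p), rfl⟩
        exact Submodule.inner_left_of_mem_orthogonal hmem hq
      exact inner_self_eq_zero.1 hz
    have hwp : w = A p := by
      rw [hw, ← sub_eq_zero, ← map_sub]
      exact hAq
    rw [hwp]
    -- A p ∈ closure (A '' E) ⊆ closure (span η)
    have hpV : p ∈ closure (E : Set G) := by
      have h3 : p ∈ V := (V.orthogonalProjectionOnto h).2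
      rw [← SetLike.mem_coe, hV, Submodule.topologicalClosure_coe] at h3
      exact h3
    have h1 : A p ∈ closure (A '' (E : Set G)) :=
      image_closure_subset_closure_image A.continuous ⟨p, hpV, rfl⟩
    refine closure_mono ?_ h1
    intro x hx
    obtain ⟨y, hy, rfl⟩ := hx
    have : (A : G →ₗ[ℝ] F) y ∈ Submodule.map (A : G →ₗ[ℝ] F) E := ⟨y, hy, rfl⟩
    rw [hE, Submodule.map_span] at this
    have hle : Submodule.span ℝ ((A : G →ₗ[ℝ] F) '' Set.range e)
        ≤ Submodule.span ℝ (Set.range η) := by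
      rw [Submodule.span_le]
      rintro _ ⟨_, ⟨j, rfl⟩, rfl⟩
      have : (A : G →ₗ[ℝ] F) (e j) = Real.sqrt (lam j) • η j := hAe j
      rw [this]
      exact Submodule.smul_mem _ _ (Submodule.subset_span ⟨j, rfl⟩)
    exact hle this
  -- w ∈ K'
  have hwK' : w ∈ K' := by
    set p' : F := (K'.orthogonalProjectionOnto w : F) with hp'
    have hr : w - p' ∈ K'ᗮ := Submodule.sub_starProjection_mem_orthogonal w
    -- η j ∈ K'ᗮ for j ≤ m
    have hηperp : ∀ j, j ≤ m → η j ∈ K'ᗮ := by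
      intro j hj
      rw [hK', aux_orth_closure, Submodule.mem_orthogonal]
      intro u hu
      induction hu using Submodule.span_induction with
      | mem x hx =>
        obtain ⟨k, hk, rfl⟩ := hx
        have hkj : k ≠ j := fun hkj => absurd hj (not_le.2 (hkj ▸ hk))
        rw [orthonormal_iff_ite.1 hon k j, if_neg hkj]
      | zero => simp
      | add x y _ _ hx hy => rw [inner_add_left, hx, hy, add_zero]
      | smul a x _ hx => rw [inner_smul_left, hx, mul_zero]
    -- w - p' ∈ Kfullᗮ
    have hrKfull : w - p' ∈ Kfullᗮ := by
      rw [hKfull, aux_orth_closure, Submodule.mem_orthogonal]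
      intro u hu
      induction hu using Submodule.span_induction with
      | mem x hx =>
        obtain ⟨j, rfl⟩ := hx
        by_cases hj : j ≤ m
        · rw [inner_sub_right]
          have h1 : ⟪η j, w⟫ = 0 := by rw [real_inner_comm]; exact hwperp j hj
          have h2 : ⟪η j, p'⟫ = 0 :=
            Submodule.inner_left_of_mem_orthogonal (K'.orthogonalProjectionOnto w).2 (hηperp j hj)
          rw [h1, h2, sub_zero]
        · have hjm : m < j := not_le.1 hj
          have hmem : η j ∈ K' :=
            (Submodule.span ℝ (η '' {j | m < j})).le_topologicalClosure
              (Submodule.subset_span ⟨j, hjm, rfl⟩)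
          exact Submodule.inner_right_of_mem_orthogonal hmem hr
      | zero => simp
      | add x y _ _ hx hy => rw [inner_add_left, hx, hy, add_zero]
      | smul a x _ hx => rw [inner_smul_left, hx, mul_zero]
    have hrKfull' : w - p' ∈ Kfull := by
      refine Submodule.sub_mem _ hwKfull ?_
      have hK'le : K' ≤ Kfull := by
        rw [hK', hKfull]
        exact Submodule.topologicalClosure_mono
          (Submodule.span_mono (Set.image_subset_range η _))
      exact hK'le (K'.orthogonalProjectionOnto w).2
    have : w - p' = 0 := by
      have := Submodule.inner_right_of_mem_orthogonal hrKfull' hrKfull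
      exact inner_self_eq_zero.1 this
    rw [sub_eq_zero] at this
    rw [this]
    exact (K'.orthogonalProjectionOnto w).2
  -- the key estimate on the span
  have hspan : ∀ v ∈ Submodule.span ℝ (η '' {j | m < j}), ‖S v‖ ^ 2 ≤ lam' * ‖v‖ ^ 2 := by
    intro v hv
    rw [Set.image_eq_range] at hv
    obtain ⟨c, rfl⟩ := Finsupp.mem_span_range_iff_exists_finsupp.1 hv
    set v := c.sum fun i a => a • η (i : ι) with hvdef
    have hon' : Orthonormal ℝ (fun i : {j | m < j} => η (i : ι)) :=
      hon.comp _ Subtype.val_injective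
    have hONS' : Orthonormal ℝ (fun i : {j | m < j} => e (i : ι)) :=
      hONS.comp _ Subtype.val_injective
    have hv2 : ‖v‖ ^ 2 = ∑ i ∈ c.support, (c i) ^ 2 := by
      rw [← real_inner_self_eq_norm_sq, hvdef, Finsupp.sum]
      rw [hon'.inner_sum]
      simp [sq]
    have hSv : S v = ∑ i ∈ c.support, (c i * Real.sqrt (lam i)) • e (i : ι) := by
      rw [hvdef, Finsupp.sum, map_sum]
      refine Finset.sum_congr rfl fun i _ => ?_
      rw [map_smul, hSe i, smul_smul]
    have hSv2 : ‖S (v : F)‖ ^ 2 = ∑ i ∈ c.support, (c i * Real.sqrt (lam i)) ^ 2 := by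
      rw [← real_inner_self_eq_norm_sq, hSv, hONS'.inner_sum]
      simp [sq]
    rw [hSv2, hv2, Finset.mul_sum]
    refine Finset.sum_le_sum fun i _ => ?_
    rw [mul_pow, Real.sq_sqrt (hpos i).le, mul_comm (lam' : ℝ) _]
    exact mul_le_mul_of_nonneg_left (hlamle i i.2) (sq_nonneg _)
  -- extend to the closure
  have hclos : ∀ v ∈ K', ‖S v‖ ^ 2 ≤ lam' * ‖v‖ ^ 2 := by
    intro v hv
    have hset : IsClosed {v : F | ‖S v‖ ^ 2 ≤ lam' * ‖v‖ ^ 2} := by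
      apply isClosed_le
      · exact (continuous_norm.comp S.continuous).pow 2
      · exact continuous_const.mul (continuous_norm.pow 2)
    have hsub : closure ((Submodule.span ℝ (η '' {j | m < j}) : Set F))
        ⊆ {v : F | ‖S v‖ ^ 2 ≤ lam' * ‖v‖ ^ 2} :=
      closure_minimal (fun x hx => hspan x hx) hset
    apply hsub
    rw [← SetLike.mem_coe, hK', Submodule.topologicalClosure_coe] at hv
    exact hv
  have key : ‖S w‖ ^ 2 ≤ lam' * ‖w‖ ^ 2 := hclos w hwK'
  -- conclude
  have h1 : ‖w‖ ^ 2 ≤ ‖h‖ * ‖S w‖ := by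
    have : ‖w‖ ^ 2 = ⟪h, S w⟫ := by
      rw [← real_inner_self_eq_norm_sq, hw, ContinuousLinearMap.adjoint_inner_left]
    rw [this]
    exact real_inner_le_norm h (S w)
  nlinarith [norm_nonneg w, norm_nonneg h, norm_nonneg (S w), sq_nonneg (‖w‖ ^ 2 - lam' * ‖h‖ ^ 2),
    mul_nonneg hlam'0 (sq_nonneg ‖h‖), sq_nonneg ‖w‖]
end

section
/- Let S : F → G be a nonzero continuous linear map between real Hilbert spaces and let (η_j)_{j ∈ J} be an orthonormal family in F with S*(S η_j) = λ_j·η_j and λ_j > 0 for all j ∈ J. If the closed linear span of (η_j)_{j ∈ J} contains the orthogonal complement of the kernel of S, then the family (λ_j^{-1/2}·S η_j)_{j ∈ J} is a complete orthonormal system (Hilbert basis) of the closure of the range of S in G. -/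
open scoped RealInnerProductSpace

/-- Let `S : F → G` be nonzero and `(η j)` an orthonormal family of eigenvectors of
`S*S` with positive eigenvalues `lam j`.  If the closed linear span of the `η j`
contains the orthogonal complement of the kernel of `S`, then the normalized images
`(√(lam j))⁻¹ • S (η j)` form a complete orthonormal system (Hilbert basis) of the
closure of the range of `S` in `G`. -/
theorem normalized_images_complete_orthonormal_system {F G : Type*}
    [NormedAddCommGroup F] [InnerProductSpace ℝ F] [CompleteSpace F]
    [NormedAddCommGroup G] [InnerProductSpace ℝ G] [CompleteSpace G]
    {ι : Type*}
    (S : F →L[ℝ] G) (hS : S ≠ 0)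
    (η : ι → F) (hon : Orthonormal ℝ η)
    (lam : ι → ℝ) (hpos : ∀ j, 0 < lam j)
    (heig : ∀ j, ContinuousLinearMap.adjoint S (S (η j)) = lam j • η j)
    (hspan : (LinearMap.ker (S : F →ₗ[ℝ] G))ᗮ
        ≤ (Submodule.span ℝ (Set.range η)).topologicalClosure) :
    Orthonormal ℝ (fun j => (Real.sqrt (lam j))⁻¹ • S (η j)) ∧
    (Submodule.span ℝ
        (Set.range fun j => (Real.sqrt (lam j))⁻¹ • S (η j))).topologicalClosure
      = (LinearMap.range (S : F →ₗ[ℝ] G)).topologicalClosure := by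
  classical
  have key : ∀ i j, ⟪S (η i), S (η j)⟫ = lam j * ⟪η i, η j⟫ := by
    intro i j
    rw [← ContinuousLinearMap.adjoint_inner_right, heig, inner_smul_right]
  have hsqrt : ∀ j, Real.sqrt (lam j) ≠ 0 := fun j =>
    Real.sqrt_ne_zero'.mpr (hpos j)
  constructor
  · rw [orthonormal_iff_ite]
    intro i j
    simp only [inner_smul_left, inner_smul_right, key, conj_trivial]
    rcases eq_or_ne i j with rfl | hne
    · rw [if_pos rfl, orthonormal_iff_ite.mp hon i i, if_pos rfl]
      field_simp
      rw [Real.sq_sqrt (hpos i).le]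
      exact div_self (hpos i).ne'
    · rw [if_neg hne, orthonormal_iff_ite.mp hon i j, if_neg hne]
      ring
  · apply le_antisymm
    · apply Submodule.topologicalClosure_mono
      rw [Submodule.span_le]
      rintro _ ⟨j, rfl⟩
      exact Submodule.smul_mem _ _ (LinearMap.mem_range_self _ _)
    · refine Submodule.topologicalClosure_minimal _ ?_
        (Submodule.isClosed_topologicalClosure _)
      rintro _ ⟨x, rfl⟩
      set K := LinearMap.ker (S : F →ₗ[ℝ] G) with hK
      have hKclosed : IsClosed (K : Set F) := ContinuousLinearMap.isClosed_ker S
      haveI : CompleteSpace K := hKclosed.completeSpace_coe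
      obtain ⟨y, hy, z, hz, rfl⟩ := K.exists_add_mem_mem_orthogonal x
      have hSy : S y = 0 := hy
      have hSz : S (y + z) = S z := by
        simp [map_add, hSy]
      have hSz' : (S : F →ₗ[ℝ] G) (y + z) = S z := hSz
      rw [hSz']
      -- S z lies in the closure of the image of span η
      have hz' : z ∈ closure ((Submodule.span ℝ (Set.range η)) : Set F) :=
        hspan hz
      have h1 : S z ∈ closure ((S : F →ₗ[ℝ] G) '' (Submodule.span ℝ (Set.range η))) :=
        image_closure_subset_closure_image S.continuous ⟨z, hz', rfl⟩
      have hmap : (S : F →ₗ[ℝ] G) '' (Submodule.span ℝ (Set.range η)) =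
          ((Submodule.map (S : F →ₗ[ℝ] G) (Submodule.span ℝ (Set.range η))) : Set G) := rfl
      have hle : Submodule.map (S : F →ₗ[ℝ] G) (Submodule.span ℝ (Set.range η)) ≤
          Submodule.span ℝ (Set.range fun j => (Real.sqrt (lam j))⁻¹ • S (η j)) := by
        rw [Submodule.map_span, Submodule.span_le]
        rintro _ ⟨_, ⟨j, rfl⟩, rfl⟩
        have : (S : F →ₗ[ℝ] G) (η j) =
            Real.sqrt (lam j) • ((Real.sqrt (lam j))⁻¹ • S (η j)) := by
          rw [smul_smul, mul_inv_cancel₀ (hsqrt j), one_smul]; rfl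
        rw [this]
        exact Submodule.smul_mem _ _ (Submodule.subset_span ⟨j, rfl⟩)
      have h2 : closure ((S : F →ₗ[ℝ] G) '' (Submodule.span ℝ (Set.range η))) ⊆
          ((Submodule.span ℝ
            (Set.range fun j => (Real.sqrt (lam j))⁻¹ • S (η j))).topologicalClosure : Set G) := by
        rw [hmap]
        apply closure_minimal
        · exact fun a ha => Submodule.le_topologicalClosure _ (hle ha)
        · exact Submodule.isClosed_topologicalClosure _
      exact h2 h1
end

section
/- Let S : F → G be a nonzero continuous linear map between real Hilbert spaces with λ₁ := ‖S‖² > 0, and suppose there exist N orthonormal vectors e_1,…,e_N in F with S*(S e_i) = λ₁·e_i for all i. Then for every n < N, all continuous linear functionals L_1,…,L_n on F and all g_1,…,g_n ∈ G one has sup_{‖f‖_F ≤ 1} ‖S f − Σ_{j=1}^n L_j(f)·g_j‖_G ≥ ‖S‖; that is, the n-th minimal error of S with respect to the class of all continuous linear functionals equals the initial error ‖S‖ for all n < N. -/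
open scoped RealInnerProductSpace

/-- Let `S : F → G` be nonzero (so `λ₁ := ‖S‖² > 0`) and suppose there are `N`
orthonormal vectors `e i` in `F` with `S*S (e i) = ‖S‖² • e i`.  Then for every `n < N`,
any linear algorithm using `n` continuous linear functionals has worst-case error at
least `‖S‖` on the unit ball, i.e. the `n`-th minimal error of `S` for the class of all
continuous linear functionals equals the initial error `‖S‖` for all `n < N`. -/
theorem minimal_error_eq_initial_of_multiplicity {F G : Type*}
    [NormedAddCommGroup F] [InnerProductSpace ℝ F] [CompleteSpace F]
    [NormedAddCommGroup G] [InnerProductSpace ℝ G] [CompleteSpace G]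
    (S : F →L[ℝ] G) (hS : S ≠ 0) (N : ℕ) (e : Fin N → F) (hon : Orthonormal ℝ e)
    (heig : ∀ i, ContinuousLinearMap.adjoint S (S (e i)) = (‖S‖ ^ 2) • e i)
    (n : ℕ) (hn : n < N) (L : Fin n → F →L[ℝ] ℝ) (g : Fin n → G) :
    ‖S‖ ≤ ⨆ f : {f : F // ‖f‖ ≤ 1}, ‖S f.1 - ∑ j, L j f.1 • g j‖ := by
  -- linear map ℝ^N → ℝ^n
  let ψ : (Fin N → ℝ) →ₗ[ℝ] (Fin n → ℝ) :=
    { toFun := fun v j => L j (∑ i, v i • e i)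
      map_add' := by
        intro a b
        funext j
        simp [add_smul, Finset.sum_add_distrib]
      map_smul' := by
        intro c a
        funext j
        simp only [Pi.smul_apply, smul_eq_mul, map_sum, map_smul, Finset.mul_sum,
          mul_assoc, RingHom.id_apply] }
  obtain ⟨v, hv0, hvk⟩ : ∃ v : Fin N → ℝ, v ≠ 0 ∧ ψ v = 0 := by
    by_contra h
    push_neg at h
    have hinj : Function.Injective ψ := by
      rw [← LinearMap.ker_eq_bot, LinearMap.ker_eq_bot']
      intro v hv
      by_contra hv0
      exact h v hv0 hv
    have := LinearMap.finrank_le_finrank_of_injective hinj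
    simp [Module.finrank_fin_fun] at this
    omega
  set w : F := ∑ i, v i • e i with hw
  have hwL : ∀ j, L j w = 0 := by
    intro j
    have := congrFun hvk j
    simpa [ψ, hw, map_sum] using this
  have hwne : w ≠ 0 := by
    intro hw0
    apply hv0
    have hli := hon.linearIndependent
    rw [Fintype.linearIndependent_iff] at hli
    funext i
    exact hli v (by rw [← hw]; exact hw0) i
  have hwpos : (0:ℝ) < ‖w‖ := norm_pos_iff.mpr hwne
  set f : F := ‖w‖⁻¹ • w with hf
  have hf1 : ‖f‖ = 1 := by
    rw [hf, norm_smul, norm_inv, norm_norm, inv_mul_cancel₀ hwpos.ne']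
  have hfL : ∀ j, L j f = 0 := by
    intro j
    rw [hf, map_smul, hwL j, smul_zero]
  have heigf : ContinuousLinearMap.adjoint S (S f) = (‖S‖ ^ 2) • f := by
    have heigw : ContinuousLinearMap.adjoint S (S w) = (‖S‖ ^ 2) • w := by
      rw [hw]
      simp only [map_sum, map_smul, heig, Finset.smul_sum]
      exact Finset.sum_congr rfl fun i _ => smul_comm _ _ _
    rw [hf, map_smul, map_smul, heigw, smul_comm]
  have hSf : ‖S f‖ = ‖S‖ := by
    have h1 : ‖S f‖ ^ 2 = ‖S‖ ^ 2 := by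
      have : ⟪S f, S f⟫ = ⟪ContinuousLinearMap.adjoint S (S f), f⟫ := by
        rw [ContinuousLinearMap.adjoint_inner_left]
      rw [real_inner_self_eq_norm_sq, heigf, real_inner_smul_left,
        real_inner_self_eq_norm_sq, hf1] at this
      simpa using this
    have := congrArg Real.sqrt h1
    rwa [Real.sqrt_sq (norm_nonneg _), Real.sqrt_sq (norm_nonneg _)] at this
  have hb : BddAbove (Set.range fun f : {f : F // ‖f‖ ≤ 1} => ‖S f.1 - ∑ j, L j f.1 • g j‖) := by
    refine ⟨‖S‖ + ∑ j, ‖L j‖ * ‖g j‖, ?_⟩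
    rintro x ⟨p, rfl⟩
    calc ‖S p.1 - ∑ j, L j p.1 • g j‖ ≤ ‖S p.1‖ + ‖∑ j, L j p.1 • g j‖ := norm_sub_le _ _
      _ ≤ ‖S‖ + ∑ j, ‖L j‖ * ‖g j‖ := by
        gcongr
        · calc ‖S p.1‖ ≤ ‖S‖ * ‖p.1‖ := S.le_opNorm _
            _ ≤ ‖S‖ * 1 := by gcongr; exact p.2
            _ = ‖S‖ := mul_one _
        · refine (norm_sum_le _ _).trans (Finset.sum_le_sum fun j _ => ?_)
          rw [norm_smul]
          gcongr
          calc ‖L j p.1‖ ≤ ‖L j‖ * ‖p.1‖ := (L j).le_opNorm _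
            _ ≤ ‖L j‖ * 1 := by gcongr; exact p.2
            _ = ‖L j‖ := mul_one _
  have key : ‖S f - ∑ j, L j f • g j‖ = ‖S‖ := by
    simp [hfL, hSf]
  calc ‖S‖ = ‖S f - ∑ j, L j f • g j‖ := key.symm
    _ ≤ _ := le_ciSup hb ⟨f, hf1.le⟩
end

section
/- Let N ≥ 1 and let V be the real inner product space of functions f : Fin N → ℝ with ⟨f, h⟩ = N^{-1}·Σ_{i} f(i)·h(i), and let I(f) = N^{-1}·Σ_{i} f(i). Then for every n < N, every map τ : Fin n → Fin N and all reals a_1,…,a_n, one has sup_{‖f‖ ≤ 1} |I(f) − Σ_{j=1}^n a_j·f(τ(j))| ≥ √(1 − n/N). -/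
/-- Model of integration on the space of functions on `[0,1]^d` that are constant on each
of the `N = 2^d` dyadic subcubes, with the `L₂` inner product `⟨f,h⟩ = N⁻¹ ∑ i, f i * h i`
(so `‖f‖² = N⁻¹ ∑ i, (f i)²`) and mean-value functional `I f = N⁻¹ ∑ i, f i`.
For every `n < N`, every choice of `n` coordinate evaluations `τ` and coefficients `a`,
the worst-case error of the linear algorithm `f ↦ ∑ j, a j * f (τ j)` on the unit ball is
at least `√(1 - n/N)`. -/
theorem mean_value_functional_lower_bound (N n : ℕ) (hN : 1 ≤ N) (hn : n < N)
    (τ : Fin n → Fin N) (a : Fin n → ℝ) :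
    Real.sqrt (1 - (n : ℝ) / N) ≤
      ⨆ f : {f : Fin N → ℝ // (N : ℝ)⁻¹ * ∑ i, f i ^ 2 ≤ 1},
        |(N : ℝ)⁻¹ * ∑ i, f.1 i - ∑ j, a j * f.1 (τ j)| := by
  have hN0 : (0:ℝ) < N := by positivity
  -- boundedness of the range
  have hbdd : BddAbove (Set.range fun f : {f : Fin N → ℝ // (N : ℝ)⁻¹ * ∑ i, f i ^ 2 ≤ 1} =>
      |(N : ℝ)⁻¹ * ∑ i, f.1 i - ∑ j, a j * f.1 (τ j)|) := by
    refine ⟨1 + ∑ j, |a j| * Real.sqrt N, ?_⟩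
    rintro x ⟨f, rfl⟩
    obtain ⟨f, hf⟩ := f
    have hsum : ∑ i, f i ^ 2 ≤ N := by
      have h := mul_le_mul_of_nonneg_left hf hN0.le
      rwa [← mul_assoc, mul_inv_cancel₀ hN0.ne', one_mul, mul_one] at h
    have hpt : ∀ i, |f i| ≤ Real.sqrt N := by
      intro i
      rw [← Real.sqrt_sq_eq_abs]
      apply Real.sqrt_le_sqrt
      calc f i ^ 2 ≤ ∑ k, f k ^ 2 :=
            Finset.single_le_sum (f := fun k => f k ^ 2) (fun k _ => sq_nonneg _)
              (Finset.mem_univ i)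
        _ ≤ N := hsum
    have h1 : |(N : ℝ)⁻¹ * ∑ i, f i| ≤ 1 := by
      have hcs : (∑ i, f i) ^ 2 ≤ (N : ℝ) * ∑ i, f i ^ 2 := by
        simpa using sq_sum_le_card_mul_sum_sq (s := Finset.univ) (f := f)
      have : ((N : ℝ)⁻¹ * ∑ i, f i) ^ 2 ≤ 1 := by
        rw [mul_pow]
        calc ((N:ℝ)⁻¹)^2 * (∑ i, f i)^2 ≤ ((N:ℝ)⁻¹)^2 * ((N:ℝ) * (N:ℝ)) := by
              have h2 : (N:ℝ) * ∑ i, f i ^ 2 ≤ (N:ℝ) * (N:ℝ) :=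
                mul_le_mul_of_nonneg_left hsum hN0.le
              exact mul_le_mul_of_nonneg_left (hcs.trans h2) (sq_nonneg _)
          _ = 1 := by field_simp
      nlinarith [abs_nonneg ((N : ℝ)⁻¹ * ∑ i, f i), sq_abs ((N : ℝ)⁻¹ * ∑ i, f i)]
    calc |(N : ℝ)⁻¹ * ∑ i, f i - ∑ j, a j * f (τ j)|
        ≤ |(N : ℝ)⁻¹ * ∑ i, f i| + |∑ j, a j * f (τ j)| := abs_sub _ _
      _ ≤ 1 + ∑ j, |a j| * Real.sqrt N := by
          refine add_le_add h1 ?_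
          refine (Finset.abs_sum_le_sum_abs _ _).trans (Finset.sum_le_sum fun j _ => ?_)
          rw [abs_mul]
          exact mul_le_mul_of_nonneg_left (hpt _) (abs_nonneg _)
  -- the fooling function
  set S : Finset (Fin N) := (Finset.image τ Finset.univ)ᶜ with hS
  have hcard : N - n ≤ S.card := by
    rw [hS, Finset.card_compl, Fintype.card_fin]
    have : (Finset.image τ Finset.univ).card ≤ n := by
      simpa using Finset.card_image_le (s := (Finset.univ : Finset (Fin n))) (f := τ)
    omega
  have hm0 : 0 < S.card := by omega
  have hm0' : (0:ℝ) < S.card := by exact_mod_cast hm0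
  set c : ℝ := Real.sqrt ((N : ℝ) / S.card) with hc
  have hc0 : 0 ≤ c := Real.sqrt_nonneg _
  set f : Fin N → ℝ := fun i => if i ∈ S then c else 0 with hfdef
  have hsq : ∑ i, f i ^ 2 = S.card * c ^ 2 := by
    have : ∀ i, f i ^ 2 = if i ∈ S then c ^ 2 else 0 := by
      intro i; by_cases h : i ∈ S <;> simp [hfdef, h]
    simp only [this, Finset.sum_ite_mem, Finset.univ_inter, Finset.sum_const, nsmul_eq_mul]
  have hsum1 : ∑ i, f i = S.card * c := by
    simp only [hfdef, Finset.sum_ite_mem, Finset.univ_inter, Finset.sum_const, nsmul_eq_mul]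
  have hfnorm : (N : ℝ)⁻¹ * ∑ i, f i ^ 2 ≤ 1 := by
    rw [hsq, hc, Real.sq_sqrt (by positivity)]
    rw [show (S.card : ℝ) * ((N:ℝ) / S.card) = (N:ℝ) by field_simp]
    rw [inv_mul_cancel₀ hN0.ne']
  have hτ : ∀ j, f (τ j) = 0 := by
    intro j
    have : τ j ∉ S := by
      rw [hS, Finset.mem_compl, not_not]
      exact Finset.mem_image_of_mem τ (Finset.mem_univ j)
    simp [hfdef, this]
  have hval : (N : ℝ)⁻¹ * ∑ i, f i - ∑ j, a j * f (τ j) = Real.sqrt ((S.card : ℝ) / N) := by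
    have h2 : ∑ j, a j * f (τ j) = 0 := by
      apply Finset.sum_eq_zero; intro j _; rw [hτ j, mul_zero]
    rw [hsum1, h2, sub_zero, hc, ← mul_assoc]
    rw [show (N:ℝ)⁻¹ * S.card = Real.sqrt (((N:ℝ)⁻¹ * S.card)^2) from
      (Real.sqrt_sq (by positivity)).symm]
    rw [← Real.sqrt_mul (by positivity)]
    congr 1
    field_simp
  refine le_trans ?_ (le_ciSup hbdd ⟨f, hfnorm⟩)
  simp only
  rw [hval, abs_of_nonneg (Real.sqrt_nonneg _)]
  apply Real.sqrt_le_sqrt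
  have hcast : (N:ℝ) - n ≤ S.card := by
    have h := (Nat.cast_le (α := ℝ)).2 hcard
    rwa [Nat.cast_sub hn.le] at h
  calc 1 - (n:ℝ)/N = ((N:ℝ) - n)/N := by field_simp
    _ ≤ (S.card : ℝ) / N := by gcongr
end

section
/- Let N ≥ 1 and let V be the real inner product space of functions f : Fin N → ℝ with ⟨f, h⟩ = N^{-1}·Σ_{i} f(i)·h(i), and let I(f) = N^{-1}·Σ_{i} f(i). For every subset T ⊆ Fin N with |T| = n ≤ N, the linear algorithm A(f) = N^{-1}·Σ_{i ∈ T} f(i) satisfies sup_{‖f‖ ≤ 1} |I(f) − A(f)| = √(1 − n/N). Consequently, for every 0 ≤ n ≤ N, the n-th minimal worst-case error of I over algorithms using n coordinate evaluations equals √(1 − n/N). -/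
open Finset

/-- Cauchy–Schwarz bound: on the unit ball, a partial average is at most `√(|S|/N)`. -/
private lemma mvf_cs_bound (N : ℕ) (hN : 1 ≤ N) (S : Finset (Fin N)) (f : Fin N → ℝ)
    (hf : (N : ℝ)⁻¹ * ∑ i, f i ^ 2 ≤ 1) :
    |(N : ℝ)⁻¹ * ∑ i ∈ S, f i| ≤ Real.sqrt ((S.card : ℝ) / N) := by
  have hN' : (0 : ℝ) < N := by exact_mod_cast hN
  have h1 : (∑ i ∈ S, f i) ^ 2 ≤ (S.card : ℝ) * ∑ i ∈ S, f i ^ 2 := by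
    have := Finset.sum_mul_sq_le_sq_mul_sq S (fun _ => (1 : ℝ)) f
    simpa using this
  have h2 : ∑ i ∈ S, f i ^ 2 ≤ (N : ℝ) := by
    have h3 : ∑ i ∈ S, f i ^ 2 ≤ ∑ i, f i ^ 2 :=
      Finset.sum_le_sum_of_subset_of_nonneg (Finset.subset_univ S)
        (fun i _ _ => sq_nonneg _)
    rw [inv_mul_le_iff₀ hN'] at hf
    simpa using h3.trans hf
  have hc : (0 : ℝ) ≤ (S.card : ℝ) := Nat.cast_nonneg _
  apply Real.abs_le_sqrt
  have key : (∑ i ∈ S, f i) ^ 2 ≤ (S.card : ℝ) * N :=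
    h1.trans (mul_le_mul_of_nonneg_left h2 hc)
  have hrw : ((N : ℝ)⁻¹ * ∑ i ∈ S, f i) ^ 2 = (∑ i ∈ S, f i) ^ 2 / N ^ 2 := by
    rw [mul_pow, inv_pow, inv_mul_eq_div]
  rw [hrw]
  calc (∑ i ∈ S, f i) ^ 2 / N ^ 2 ≤ ((S.card : ℝ) * N) / N ^ 2 :=
        (div_le_div_iff_of_pos_right (by positivity)).mpr key
    _ = (S.card : ℝ) / N := by field_simp

/-- Extremal element: a unit-ball function vanishing on `S` whose mean is `√(1 - |S|/N)`. -/
private lemma mvf_witness (N : ℕ) (hN : 1 ≤ N) (S : Finset (Fin N)) :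
    ∃ f : Fin N → ℝ, ((N : ℝ)⁻¹ * ∑ i, f i ^ 2 ≤ 1) ∧ (∀ i ∈ S, f i = 0) ∧
      (N : ℝ)⁻¹ * ∑ i, f i = Real.sqrt (1 - (S.card : ℝ) / N) := by
  have hN' : (0 : ℝ) < N := by exact_mod_cast hN
  have hm : S.card ≤ N := by simpa using Finset.card_le_univ S
  set t : ℝ := (N : ℝ) - S.card with ht_def
  have ht : 0 ≤ t := by
    have : (S.card : ℝ) ≤ N := by exact_mod_cast hm
    linarith
  set c : ℝ := Real.sqrt ((N : ℝ) / t) with hc_def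
  have hc : 0 ≤ c := Real.sqrt_nonneg _
  refine ⟨fun i => if i ∈ S then 0 else c, ?_, fun i hi => by simp [hi], ?_⟩
  · -- norm bound
    have hsum : ∑ i, (if i ∈ S then (0:ℝ) else c) ^ 2 = t * c ^ 2 := by
      have : ∀ i : Fin N, (if i ∈ S then (0:ℝ) else c) ^ 2
          = (if i ∈ S then (0:ℝ) else c ^ 2) := by
        intro i; by_cases hi : i ∈ S <;> simp [hi]
      rw [Finset.sum_congr rfl (fun i _ => this i), Finset.sum_ite,
        Finset.sum_const_zero, Finset.sum_const, zero_add]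
      have hcard : (Finset.filter (fun x => x ∉ S) Finset.univ).card = N - S.card := by
        simpa [Finset.card_compl] using (congrArg Finset.card
          (by ext x; simp : Finset.filter (fun x => x ∉ S) Finset.univ = Sᶜ))
      rw [hcard, nsmul_eq_mul, ht_def, Nat.cast_sub hm]
    rw [hsum]
    rcases eq_or_lt_of_le ht with h0 | h0
    · rw [← h0]; simp
    · have hc2 : c ^ 2 = (N : ℝ) / t := Real.sq_sqrt (by positivity)
      rw [hc2]
      rw [mul_div_cancel₀ _ (ne_of_gt h0)]
      rw [inv_mul_cancel₀ (ne_of_gt hN')]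
  · -- value
    have hsum : ∑ i, (if i ∈ S then (0:ℝ) else c) = t * c := by
      rw [Finset.sum_ite, Finset.sum_const_zero, Finset.sum_const, zero_add]
      have hcard : (Finset.filter (fun x => x ∉ S) Finset.univ).card = N - S.card := by
        simpa [Finset.card_compl] using (congrArg Finset.card
          (by ext x; simp : Finset.filter (fun x => x ∉ S) Finset.univ = Sᶜ))
      rw [hcard, nsmul_eq_mul, ht_def, Nat.cast_sub hm]
    rw [hsum]
    have hgoal : 1 - (S.card : ℝ) / N = t / N := by
      rw [ht_def]; field_simp
    rw [hgoal]
    rcases eq_or_lt_of_le ht with h0 | h0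
    · rw [← h0]; simp
    · have hc2 : c ^ 2 = (N : ℝ) / t := Real.sq_sqrt (by positivity)
      have hsq : t / N = ((N : ℝ)⁻¹ * (t * c)) ^ 2 := by
        have : ((N : ℝ)⁻¹ * (t * c)) ^ 2 = (N : ℝ)⁻¹ ^ 2 * t ^ 2 * c ^ 2 := by ring
        rw [this, hc2]
        field_simp
      rw [hsq, Real.sqrt_sq (by positivity)]

/-- worst-case error of the `T`-average equals `√(1 - |T|/N)`. -/
private lemma mvf_sup_eq (N : ℕ) (hN : 1 ≤ N) (T : Finset (Fin N)) :
    (⨆ f : {f : Fin N → ℝ // (N : ℝ)⁻¹ * ∑ i, f i ^ 2 ≤ 1},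
        |(N : ℝ)⁻¹ * ∑ i, f.1 i - (N : ℝ)⁻¹ * ∑ i ∈ T, f.1 i|)
      = Real.sqrt (1 - (T.card : ℝ) / N) := by
  have hN' : (0 : ℝ) < N := by exact_mod_cast hN
  have hm : T.card ≤ N := by simpa using Finset.card_le_univ T
  haveI : Nonempty {f : Fin N → ℝ // (N : ℝ)⁻¹ * ∑ i, f i ^ 2 ≤ 1} :=
    ⟨⟨0, by simp⟩⟩
  have hdiff : ∀ f : Fin N → ℝ,
      (N : ℝ)⁻¹ * ∑ i, f i - (N : ℝ)⁻¹ * ∑ i ∈ T, f i = (N : ℝ)⁻¹ * ∑ i ∈ Tᶜ, f i := by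
    intro f
    rw [← Finset.sum_add_sum_compl T f]
    ring
  have hcardc : ((Tᶜ.card : ℕ) : ℝ) = (N : ℝ) - T.card := by
    rw [Finset.card_compl, Fintype.card_fin, Nat.cast_sub hm]
  have hrhs : Real.sqrt (1 - (T.card : ℝ) / N) = Real.sqrt ((Tᶜ.card : ℝ) / N) := by
    congr 1
    rw [hcardc]
    field_simp
  apply le_antisymm
  · apply ciSup_le
    intro f
    rw [hdiff f.1, hrhs]
    exact mvf_cs_bound N hN Tᶜ f.1 f.2
  · obtain ⟨g, hg1, hg2, hg3⟩ := mvf_witness N hN T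
    have hbdd : BddAbove (Set.range fun f : {f : Fin N → ℝ // (N : ℝ)⁻¹ * ∑ i, f i ^ 2 ≤ 1} =>
        |(N : ℝ)⁻¹ * ∑ i, f.1 i - (N : ℝ)⁻¹ * ∑ i ∈ T, f.1 i|) := by
      refine ⟨Real.sqrt ((Tᶜ.card : ℝ) / N), ?_⟩
      rintro x ⟨f, rfl⟩
      show |(N : ℝ)⁻¹ * ∑ i, f.1 i - (N : ℝ)⁻¹ * ∑ i ∈ T, f.1 i| ≤ _
      rw [hdiff f.1]
      exact mvf_cs_bound N hN Tᶜ f.1 f.2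
    have := le_ciSup hbdd (⟨g, hg1⟩ : {f : Fin N → ℝ // (N : ℝ)⁻¹ * ∑ i, f i ^ 2 ≤ 1})
    refine le_trans ?_ this
    have hT0 : ∑ i ∈ T, g i = 0 := Finset.sum_eq_zero hg2
    rw [hT0, mul_zero, sub_zero, hg3, abs_of_nonneg (Real.sqrt_nonneg _)]

/-- Lower bound for arbitrary algorithms using `n` evaluations. -/
private lemma mvf_sup_lb (N n : ℕ) (hN : 1 ≤ N) (hn : n ≤ N)
    (τ : Fin n → Fin N) (a : Fin n → ℝ) :
    Real.sqrt (1 - (n : ℝ) / N) ≤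
      ⨆ f : {f : Fin N → ℝ // (N : ℝ)⁻¹ * ∑ i, f i ^ 2 ≤ 1},
        |(N : ℝ)⁻¹ * ∑ i, f.1 i - ∑ j, a j * f.1 (τ j)| := by
  have hN' : (0 : ℝ) < N := by exact_mod_cast hN
  haveI : Nonempty {f : Fin N → ℝ // (N : ℝ)⁻¹ * ∑ i, f i ^ 2 ≤ 1} :=
    ⟨⟨0, by simp⟩⟩
  -- bounded above
  have hbdd : BddAbove (Set.range fun f : {f : Fin N → ℝ // (N : ℝ)⁻¹ * ∑ i, f i ^ 2 ≤ 1} =>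
      |(N : ℝ)⁻¹ * ∑ i, f.1 i - ∑ j, a j * f.1 (τ j)|) := by
    refine ⟨1 + (∑ j, |a j|) * Real.sqrt N, ?_⟩
    rintro x ⟨f, rfl⟩
    have hIf : |(N : ℝ)⁻¹ * ∑ i, f.1 i| ≤ 1 := by
      have := mvf_cs_bound N hN Finset.univ f.1 f.2
      simpa [Finset.card_univ, div_self (ne_of_gt hN')] using this
    have hfi : ∀ i, |f.1 i| ≤ Real.sqrt N := by
      intro i
      apply Real.abs_le_sqrt
      have h1 : f.1 i ^ 2 ≤ ∑ k, f.1 k ^ 2 :=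
        Finset.single_le_sum (f := fun k => f.1 k ^ 2) (fun k _ => sq_nonneg _) (Finset.mem_univ i)
      have h2 : ∑ k, f.1 k ^ 2 ≤ (N : ℝ) := by
        have := f.2
        rw [inv_mul_le_iff₀ hN'] at this
        simpa using this
      linarith
    calc |(N : ℝ)⁻¹ * ∑ i, f.1 i - ∑ j, a j * f.1 (τ j)|
        ≤ |(N : ℝ)⁻¹ * ∑ i, f.1 i| + |∑ j, a j * f.1 (τ j)| := abs_sub _ _
      _ ≤ 1 + (∑ j, |a j|) * Real.sqrt N := by
          gcongr
          calc |∑ j, a j * f.1 (τ j)| ≤ ∑ j, |a j * f.1 (τ j)| :=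
                Finset.abs_sum_le_sum_abs _ _
            _ ≤ ∑ j, |a j| * Real.sqrt N := by
                apply Finset.sum_le_sum
                intro j _
                rw [abs_mul]
                exact mul_le_mul_of_nonneg_left (hfi (τ j)) (abs_nonneg _)
            _ = (∑ j, |a j|) * Real.sqrt N := by rw [Finset.sum_mul]
  -- witness
  set S : Finset (Fin N) := Finset.image τ Finset.univ with hS_def
  have hmS : S.card ≤ n := by
    simpa using Finset.card_image_le (s := (Finset.univ : Finset (Fin n))) (f := τ)
  obtain ⟨g, hg1, hg2, hg3⟩ := mvf_witness N hN S
  have hzero : ∀ j, g (τ j) = 0 := fun j =>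
    hg2 (τ j) (Finset.mem_image_of_mem τ (Finset.mem_univ j))
  have := le_ciSup hbdd (⟨g, hg1⟩ : {f : Fin N → ℝ // (N : ℝ)⁻¹ * ∑ i, f i ^ 2 ≤ 1})
  refine le_trans ?_ this
  simp only
  rw [show ∑ j, a j * g (τ j) = 0 from Finset.sum_eq_zero (fun j _ => by rw [hzero j, mul_zero])]
  rw [sub_zero, hg3, abs_of_nonneg (Real.sqrt_nonneg _)]
  apply Real.sqrt_le_sqrt
  have : (S.card : ℝ) ≤ n := by exact_mod_cast hmS
  have hdiv : (S.card : ℝ) / N ≤ (n : ℝ) / N := by gcongr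
  linarith

/-- Model of integration on the space of functions on `[0,1]^d` that are constant on each
of the `N = 2^d` dyadic subcubes, with the `L₂` inner product `⟨f,h⟩ = N⁻¹ ∑ i, f i * h i`
(so `‖f‖² = N⁻¹ ∑ i, (f i)²`) and mean-value functional `I f = N⁻¹ ∑ i, f i`.
First part: for every subset `T` of the `N` coordinates with `|T| = n ≤ N`, the linear
algorithm `A f = N⁻¹ ∑ i ∈ T, f i` has worst-case error exactly `√(1 - n/N)` on the unit
ball.  Second part: for every `0 ≤ n ≤ N`, the `n`-th minimal worst-case error of `I`
over all linear algorithms using `n` coordinate evaluations equals `√(1 - n/N)`. -/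
theorem mean_value_functional_minimal_error (N : ℕ) (hN : 1 ≤ N) :
    (∀ (n : ℕ) (T : Finset (Fin N)), T.card = n → n ≤ N →
      (⨆ f : {f : Fin N → ℝ // (N : ℝ)⁻¹ * ∑ i, f i ^ 2 ≤ 1},
          |(N : ℝ)⁻¹ * ∑ i, f.1 i - (N : ℝ)⁻¹ * ∑ i ∈ T, f.1 i|)
        = Real.sqrt (1 - (n : ℝ) / N)) ∧
    (∀ n : ℕ, n ≤ N →
      (⨅ (τ : Fin n → Fin N) (a : Fin n → ℝ),
        ⨆ f : {f : Fin N → ℝ // (N : ℝ)⁻¹ * ∑ i, f i ^ 2 ≤ 1},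
          |(N : ℝ)⁻¹ * ∑ i, f.1 i - ∑ j, a j * f.1 (τ j)|)
        = Real.sqrt (1 - (n : ℝ) / N)) := by
  constructor
  · intro n T hT hn
    subst hT
    exact mvf_sup_eq N hN T
  · intro n hn
    haveI : Nonempty (Fin N) := ⟨⟨0, hN⟩⟩
    apply le_antisymm
    · -- upper bound: choose a good τ, a
      obtain ⟨T, -, hT⟩ := Finset.exists_subset_card_eq
        (show n ≤ (Finset.univ : Finset (Fin N)).card by simpa using hn)
      set e : {x // x ∈ T} ≃ Fin n := T.equivFin.trans (finCongr hT) with he_def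
      set τ₀ : Fin n → Fin N := fun j => (e.symm j : Fin N) with hτ₀_def
      have hsum : ∀ f : Fin N → ℝ, ∑ j, (N : ℝ)⁻¹ * f (τ₀ j) = (N : ℝ)⁻¹ * ∑ i ∈ T, f i := by
        intro f
        rw [← Finset.mul_sum]
        congr 1
        rw [← Finset.sum_coe_sort T f]
        exact (Fintype.sum_equiv e (fun x => f x) (fun j => f (τ₀ j))
          (fun x => by simp [hτ₀_def])).symm
      have hval : (⨆ f : {f : Fin N → ℝ // (N : ℝ)⁻¹ * ∑ i, f i ^ 2 ≤ 1},
          |(N : ℝ)⁻¹ * ∑ i, f.1 i - ∑ j, (fun _ : Fin n => (N : ℝ)⁻¹) j * f.1 (τ₀ j)|)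
          = Real.sqrt (1 - (n : ℝ) / N) := by
        have := mvf_sup_eq N hN T
        rw [hT] at this
        rw [← this]
        congr 1
        funext f
        rw [hsum f.1]
      have hlb : ∀ τ : Fin n → Fin N, BddBelow (Set.range fun a : Fin n → ℝ =>
          ⨆ f : {f : Fin N → ℝ // (N : ℝ)⁻¹ * ∑ i, f i ^ 2 ≤ 1},
            |(N : ℝ)⁻¹ * ∑ i, f.1 i - ∑ j, a j * f.1 (τ j)|) := by
        intro τ
        exact ⟨Real.sqrt (1 - (n : ℝ) / N), by
          rintro x ⟨a, rfl⟩; exact mvf_sup_lb N n hN hn τ a⟩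
      have hlb2 : BddBelow (Set.range fun τ : Fin n → Fin N =>
          ⨅ a : Fin n → ℝ, ⨆ f : {f : Fin N → ℝ // (N : ℝ)⁻¹ * ∑ i, f i ^ 2 ≤ 1},
            |(N : ℝ)⁻¹ * ∑ i, f.1 i - ∑ j, a j * f.1 (τ j)|) := by
        refine ⟨Real.sqrt (1 - (n : ℝ) / N), ?_⟩
        rintro x ⟨τ, rfl⟩
        exact le_ciInf (fun a => mvf_sup_lb N n hN hn τ a)
      refine ciInf_le_of_le hlb2 τ₀ ?_
      refine ciInf_le_of_le (hlb τ₀) (fun _ => (N : ℝ)⁻¹) ?_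
      exact le_of_eq hval
    · -- lower bound
      exact le_ciInf (fun τ => le_ciInf (fun a => mvf_sup_lb N n hN hn τ a))
end

section
/- Let α > 0 satisfy cos α = α·sin α, and define e : ℝ → ℝ by e(x) = cos(α·(x − 1)). Then for every function f : ℝ → ℝ that is continuously differentiable on [0,1], one has f(0)·e(0) + ∫₀¹ f'(x)·e'(x) dx = α²·∫₀¹ f(x)·e(x) dx. -/
/-- Let `α > 0` satisfy `cos α = α·sin α` and let `e x = cos (α·(x-1))`.  Then for every
function `f : ℝ → ℝ` that is continuously differentiable on `[0,1]` (with derivative `f'`),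
one has `f 0 * e 0 + ∫₀¹ f' x * e' x dx = α² * ∫₀¹ f x * e x dx`; that is, `e` is an
eigenfunction with eigenvalue `α⁻²` of `W = APP*∘APP` for the Sobolev space with inner
product `⟨f,h⟩ = f 0 * h 0 + ∫₀¹ f' h'`. -/
theorem eigenfunction_identity_sobolev (α : ℝ) (hα : 0 < α)
    (hcot : Real.cos α = α * Real.sin α)
    (e : ℝ → ℝ) (he : ∀ x, e x = Real.cos (α * (x - 1)))
    (f f' : ℝ → ℝ) (hf : ∀ x ∈ Set.Icc (0 : ℝ) 1, HasDerivAt f (f' x) x)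
    (hf' : ContinuousOn f' (Set.Icc (0 : ℝ) 1)) :
    f 0 * e 0 + ∫ x in (0 : ℝ)..1, f' x * deriv e x
      = α ^ 2 * ∫ x in (0 : ℝ)..1, f x * e x := by
  have hederiv : ∀ x : ℝ, HasDerivAt e (-α * Real.sin (α * (x - 1))) x := by
    intro x
    have h1 : HasDerivAt (fun x : ℝ => α * (x - 1)) α x := by
      simpa using ((hasDerivAt_id x).sub_const 1).const_mul α
    have h2 := (Real.hasDerivAt_cos (α * (x - 1))).comp x h1
    have : HasDerivAt (fun x => Real.cos (α * (x - 1)))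
        (-Real.sin (α * (x - 1)) * α) x := h2
    have heq : e = fun x => Real.cos (α * (x - 1)) := funext he
    rw [heq]
    convert this using 1
    ring
  have hde : ∀ x : ℝ, deriv e x = -α * Real.sin (α * (x - 1)) :=
    fun x => (hederiv x).deriv
  -- integration by parts: u x = -α sin (α (x-1)), v = f
  have hu : ∀ x ∈ Set.uIcc (0:ℝ) 1,
      HasDerivAt (fun x => -α * Real.sin (α * (x - 1)))
        (-α^2 * Real.cos (α * (x - 1))) x := by
    intro x _
    have h1 : HasDerivAt (fun x : ℝ => α * (x - 1)) α x := by
      simpa using ((hasDerivAt_id x).sub_const 1).const_mul α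
    have h2 : HasDerivAt (fun y => -α * Real.sin (α * (y - 1)))
        (-α * (Real.cos (α * (x - 1)) * α)) x :=
      ((Real.hasDerivAt_sin (α * (x - 1))).comp x h1).const_mul (-α)
    convert h2 using 1
    ring
  have hv : ∀ x ∈ Set.uIcc (0:ℝ) 1, HasDerivAt f (f' x) x := by
    intro x hx
    exact hf x (by rwa [Set.uIcc_of_le (by norm_num : (0:ℝ) ≤ 1)] at hx)
  have hu'int : IntervalIntegrable (fun x => -α^2 * Real.cos (α * (x - 1)))
      MeasureTheory.volume 0 1 := by
    apply Continuous.intervalIntegrable; continuity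
  have hv'int : IntervalIntegrable f' MeasureTheory.volume 0 1 := by
    apply ContinuousOn.intervalIntegrable
    rwa [Set.uIcc_of_le (by norm_num : (0:ℝ) ≤ 1)]
  have parts := intervalIntegral.integral_mul_deriv_eq_deriv_mul hu hv hu'int hv'int
  have hI1 : (∫ x in (0:ℝ)..1, f' x * deriv e x)
      = ∫ x in (0:ℝ)..1, (-α * Real.sin (α * (x - 1))) * f' x := by
    apply intervalIntegral.integral_congr
    intro x _
    simp only [hde]; ring
  rw [hI1, parts]
  have hsin0 : Real.sin (α * ((1:ℝ) - 1)) = 0 := by norm_num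
  have hsina : Real.sin (α * ((0:ℝ) - 1)) = -Real.sin α := by
    rw [show α * ((0:ℝ) - 1) = -α by ring, Real.sin_neg]
  have hI2 : (∫ x in (0:ℝ)..1, -α^2 * Real.cos (α * (x - 1)) * f x)
      = -α^2 * ∫ x in (0:ℝ)..1, f x * e x := by
    rw [← intervalIntegral.integral_const_mul]
    apply intervalIntegral.integral_congr
    intro x _
    simp only [he]; ring
  rw [hI2, hsin0, hsina, he 0]
  rw [show α * ((0:ℝ) - 1) = -α by ring, Real.cos_neg, hcot]
  ring
end

section
/- The unique α ∈ (0, π) satisfying cos α = α·sin α satisfies α² < 3/4; equivalently, λ₁ := α^{-2} > 4/3. -/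
open Real Set

/-- Cubic lower bound for sine: `x - x³/6 ≤ sin x` for `x ≥ 0`. -/
lemma aux_sin_ge_sub_cube {x : ℝ} (hx : 0 ≤ x) : x - x ^ 3 / 6 ≤ Real.sin x := by
  have hmono : MonotoneOn (fun y : ℝ => Real.sin y - (y - y ^ 3 / 6)) (Ici 0) := by
    apply monotoneOn_of_deriv_nonneg (convex_Ici 0)
    · fun_prop
    · fun_prop
    · intro y hy
      have hd : HasDerivAt (fun y : ℝ => Real.sin y - (y - y ^ 3 / 6))
          (Real.cos y - (1 - (3 : ℕ) * y ^ (3 - 1) / 6)) y :=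
        (Real.hasDerivAt_sin y).sub ((hasDerivAt_id y).sub ((hasDerivAt_pow 3 y).div_const 6))
      rw [hd.deriv]
      have := Real.one_sub_sq_div_two_le_cos (x := y)
      push_cast
      norm_num
      linarith
  have h0 : (fun y : ℝ => Real.sin y - (y - y ^ 3 / 6)) 0 ≤
      (fun y : ℝ => Real.sin y - (y - y ^ 3 / 6)) x :=
    hmono (by simp) (by exact hx) hx
  simp at h0
  linarith

/-- Quartic upper bound for cosine: `cos x ≤ 1 - x²/2 + x⁴/24` for `x ≥ 0`. -/
lemma aux_cos_le_quartic {x : ℝ} (hx : 0 ≤ x) :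
    Real.cos x ≤ 1 - x ^ 2 / 2 + x ^ 4 / 24 := by
  have hmono : MonotoneOn (fun y : ℝ => (1 - y ^ 2 / 2 + y ^ 4 / 24) - Real.cos y) (Ici 0) := by
    apply monotoneOn_of_deriv_nonneg (convex_Ici 0)
    · fun_prop
    · fun_prop
    · intro y hy
      have hy0 : (0 : ℝ) ≤ y := le_of_lt (by simpa using hy)
      have hd : HasDerivAt (fun y : ℝ => (1 - y ^ 2 / 2 + y ^ 4 / 24) - Real.cos y)
          ((0 - (2 : ℕ) * y ^ (2 - 1) / 2 + (4 : ℕ) * y ^ (4 - 1) / 24) - (-Real.sin y)) y :=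
        (((hasDerivAt_const y (1 : ℝ)).sub ((hasDerivAt_pow 2 y).div_const 2)).add
          ((hasDerivAt_pow 4 y).div_const 24)).sub (Real.hasDerivAt_cos y)
      rw [hd.deriv]
      have := aux_sin_ge_sub_cube hy0
      push_cast
      norm_num
      linarith
  have h0 : (fun y : ℝ => (1 - y ^ 2 / 2 + y ^ 4 / 24) - Real.cos y) 0 ≤
      (fun y : ℝ => (1 - y ^ 2 / 2 + y ^ 4 / 24) - Real.cos y) x :=
    hmono (by simp) (by exact hx) hx
  simp at h0
  linarith

/-- The unique `α ∈ (0, π)` with `cos α = α·sin α` (i.e. `cot α = α`) satisfies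
`α² < 3/4`; equivalently, the largest eigenvalue `λ₁ = α⁻²` of `W = APP*∘APP` for
`L₂`-approximation on the Sobolev space with kernel `K(x,y) = 1 + min(x,y)` satisfies
`λ₁ > 4/3`, the squared norm of the integration functional on that space. -/
theorem top_eigenvalue_gt_four_thirds (α : ℝ) (hα0 : 0 < α) (hαπ : α < Real.pi)
    (hcot : Real.cos α = α * Real.sin α) :
    α ^ 2 < 3 / 4 ∧ 4 / 3 < (α ^ 2)⁻¹ := by
  have hsq : α ^ 2 < 3 / 4 := by
    by_contra h
    push_neg at h
    set c : ℝ := Real.sqrt (3 / 4) with hc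
    have hc2 : c ^ 2 = 3 / 4 := Real.sq_sqrt (by norm_num)
    have hc0 : 0 < c := Real.sqrt_pos.2 (by norm_num)
    have hcα : c ≤ α := by
      nlinarith [sq_nonneg (α - c)]
    have hc1 : c < 1 := by
      nlinarith [hc0]
    have hsinα : 0 < Real.sin α := Real.sin_pos_of_pos_of_lt_pi hα0 hαπ
    rcases le_or_gt α (Real.pi / 2) with hle | hgt
    · -- α ∈ [c, π/2]
      have hcpi2 : c ≤ Real.pi / 2 := le_trans hcα hle
      -- cos α ≤ cos c
      have hcos_le : Real.cos α ≤ Real.cos c :=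
        Real.cos_le_cos_of_nonneg_of_le_pi hc0.le (le_trans hle (by linarith [Real.pi_pos])) hcα
      -- sin c ≤ sin α
      have hsin_le : Real.sin c ≤ Real.sin α := by
        apply Real.strictMonoOn_sin.monotoneOn
        · constructor <;> [linarith [Real.pi_pos]; exact hcpi2]
        · constructor <;> [linarith [Real.pi_pos]; exact hle]
        · exact hcα
      -- numeric bounds at c
      have hcosc : Real.cos c ≤ 83 / 128 := by
        have := aux_cos_le_quartic hc0.le
        nlinarith [hc2]
      have hsinc : 7 / 8 * c ≤ Real.sin c := by
        have := aux_sin_ge_sub_cube hc0.le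
        nlinarith [hc2]
      have hsinc_pos : 0 < Real.sin c := by nlinarith
      have hprod : 21 / 32 ≤ α * Real.sin α := by
        have h1 : c * Real.sin c ≤ α * Real.sin α :=
          mul_le_mul hcα hsin_le hsinc_pos.le hα0.le
        nlinarith [hc2]
      linarith [hcot, hcos_le, hcosc, hprod]
    · -- α ∈ (π/2, π): cos α < 0 but α·sin α > 0
      have hcosneg : Real.cos α < 0 :=
        Real.cos_neg_of_pi_div_two_lt_of_lt hgt (by linarith [Real.pi_pos])
      nlinarith
  refine ⟨hsq, ?_⟩
  have h2 : (0 : ℝ) < α ^ 2 := by positivity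
  have : (3 / 4 : ℝ)⁻¹ < (α ^ 2)⁻¹ := by
    exact inv_strictAnti₀ h2 hsq
  linarith [this]
end
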